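/- Let G be a group containing a subgroup N of index 2 such that N is free abelian of finite rank n. Then every torsion element of the abelianization G^{ab} = G/[G,G] has order dividing 2; consequently G^{ab} is isomorphic to ℤ^l × (ℤ/2ℤ)^k for some integers k, l ≥ 0, and moreover k + l ≤ n + 1. -/

import Mathlib

private theorem aux_torsion (G : Type*) [Group G] (N : Subgroup G) (n : ℕ)
    (hidx : N.index = 2)
    (e : ↥N ≃* Multiplicative (Fin n → ℤ)) :
    ∀ x : Abelianization G, IsOfFinOrder x → x ^ 2 = 1 := by
  classical
  have hmm : ∀ a b : G, a * b ∈ N ↔ (a ∈ N ↔ b ∈ N) := fun a b =>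
    Subgroup.mul_mem_iff_of_index_two hidx
  have hcomm : ∀ a b : G, a ∈ N → b ∈ N → a * b = b * a := by
    intro a b ha hb
    have := congrArg (Subtype.val) (e.injective (by
      rw [map_mul, map_mul, mul_comm] :
      e (⟨a, ha⟩ * ⟨b, hb⟩) = e (⟨b, hb⟩ * ⟨a, ha⟩)))
    simpa using this
  obtain ⟨u, hu⟩ : ∃ u : G, u ∉ N := by
    by_contra h
    push_neg at h
    have : N = ⊤ := by ext g; simpa using h g
    rw [this, Subgroup.index_top] at hidx
    omega
  have hconj : ∀ v w g : G, v ∉ N → w ∉ N → g ∈ N → v * g * v⁻¹ = w * g * w⁻¹ := by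
    intro v w g hv hw hg
    have hm : w⁻¹ * v ∈ N := (hmm _ _).2 (by simp [hv, hw])
    have key : (w⁻¹ * v) * g = g * (w⁻¹ * v) := hcomm _ _ hm hg
    have h1 : v * g = w * (g * (w⁻¹ * v)) := by rw [← key]; group
    rw [h1]; group
  letI : CommGroup ↥N :=
    { (inferInstance : Group ↥N) with
      mul_comm := fun x y => Subtype.ext (hcomm _ _ x.2 y.2) }
  have mem1 : ∀ g : G, g ∈ N → g * (u * g * u⁻¹) ∈ N := by
    intro g hg
    refine mul_mem hg ?_
    have h1 : u * g ∉ N := by rw [hmm]; simp [hu, hg]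
    have h2 : u⁻¹ ∉ N := by simpa using hu
    exact (hmm _ _).2 (by simp [h1, h2])
  have mem2 : ∀ g : G, g ∉ N → g * g ∈ N := fun g hg => (hmm _ _).2 (by simp [hg])
  set F : G → ↥N := fun g =>
    if hg : g ∈ N then ⟨g * (u * g * u⁻¹), mem1 g hg⟩ else ⟨g * g, mem2 g hg⟩ with hF
  have hmul : ∀ a b : G, F (a * b) = F a * F b := by
    intro a b
    by_cases ha : a ∈ N <;> by_cases hb : b ∈ N
    · have hab : a * b ∈ N := (hmm _ _).2 (by simp [ha, hb])
      apply Subtype.ext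
      simp only [hF, dif_pos ha, dif_pos hb, dif_pos hab, Subgroup.coe_mul]
      have e1 : u * (a * b) * u⁻¹ = (u * a * u⁻¹) * (u * b * u⁻¹) := by group
      rw [e1]
      have ha' : u * a * u⁻¹ ∈ N := by
        have h1 : u * a ∉ N := by rw [hmm]; simp [hu, ha]
        have h2 : u⁻¹ ∉ N := by simpa using hu
        exact (hmm _ _).2 (by simp [h1, h2])
      have c1 : b * (u * a * u⁻¹) = (u * a * u⁻¹) * b := hcomm _ _ hb ha'
      calc a * b * ((u * a * u⁻¹) * (u * b * u⁻¹))
          = a * (b * (u * a * u⁻¹)) * (u * b * u⁻¹) := by group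
        _ = a * ((u * a * u⁻¹) * b) * (u * b * u⁻¹) := by rw [c1]
        _ = a * (u * a * u⁻¹) * (b * (u * b * u⁻¹)) := by group
    · have hab : a * b ∉ N := by rw [hmm]; simp [ha, hb]
      apply Subtype.ext
      simp only [hF, dif_pos ha, dif_neg hb, dif_neg hab, Subgroup.coe_mul]
      have hub : u * a * u⁻¹ = b * a * b⁻¹ := hconj u b a hu hb ha
      rw [hub]; group
    · have hab : a * b ∉ N := by rw [hmm]; simp [ha, hb]
      apply Subtype.ext
      simp only [hF, dif_neg ha, dif_pos hb, dif_neg hab, Subgroup.coe_mul]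
      have hai : a⁻¹ ∉ N := by simpa using ha
      have hb' : a⁻¹ * b * a ∈ N := by
        have h1 : a⁻¹ * b ∉ N := by rw [hmm]; simp [hai, hb]
        exact (hmm _ _).2 (by simp [h1, ha])
      have hub : u * b * u⁻¹ = a⁻¹ * b * a := by
        have := hconj u a⁻¹ b hu hai hb
        rwa [inv_inv] at this
      rw [hub]
      have c1 : (a⁻¹ * b * a) * b = b * (a⁻¹ * b * a) := hcomm _ _ hb' hb
      calc a * b * (a * b) = a * a * ((a⁻¹ * b * a) * b) := by group
        _ = a * a * (b * (a⁻¹ * b * a)) := by rw [c1]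
    · have hab : a * b ∈ N := (hmm _ _).2 (by simp [ha, hb])
      apply Subtype.ext
      simp only [hF, dif_neg ha, dif_neg hb, dif_pos hab, Subgroup.coe_mul]
      have hub : u * (a * b) * u⁻¹ = b * a := by
        have := hconj u b (a * b) hu hb hab
        rw [this]; group
      rw [hub]
      have hbb : b * b ∈ N := mem2 b hb
      have h4 : a * (b * b) * a⁻¹ = b * (b * b) * b⁻¹ := hconj a b (b * b) ha hb hbb
      have h5 : a * (b * b) = (b * b) * a := by
        have h6 : a * (b * b) * a⁻¹ = b * b := by rw [h4]; group
        calc a * (b * b) = (a * (b * b) * a⁻¹) * a := by group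
          _ = (b * b) * a := by rw [h6]
      calc (a * b) * (b * a) = a * ((b * b) * a) := by group
        _ = a * (a * (b * b)) := by rw [← h5]
        _ = a * a * (b * b) := by group
  let f : G →* ↥N := MonoidHom.mk' F hmul
  let Φ : Abelianization G →* ↥N := Abelianization.lift f
  intro x hx
  obtain ⟨g, hg⟩ : ∃ g, Abelianization.of g = x := QuotientGroup.mk'_surjective _ x
  obtain ⟨m, hm, hpow⟩ := isOfFinOrder_iff_pow_eq_one.mp hx
  have hΦ : Φ x = 1 := by
    have h1 : (Φ x) ^ m = 1 := by rw [← map_pow, hpow, map_one]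
    have h2 : (e (Φ x)) ^ m = 1 := by rw [← map_pow, h1, map_one]
    have h3 : m • (e (Φ x)).toAdd = 0 := by rw [← toAdd_pow, h2]; rfl
    have h4 : (e (Φ x)).toAdd = 0 := by
      funext i
      have := congrFun h3 i
      simp only [Pi.smul_apply, Pi.zero_apply, nsmul_eq_mul] at this
      have hm' : (m : ℤ) ≠ 0 := by exact_mod_cast hm.ne'
      exact (mul_eq_zero.mp this).resolve_left hm'
    apply e.injective
    rw [map_one]
    exact toAdd_eq_zero.mp h4
  have hfg : f g = 1 := by rw [← hΦ, ← hg]; rfl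
  by_cases hgN : g ∈ N
  · have h1 : g * (u * g * u⁻¹) = 1 := by
      have := congrArg Subtype.val hfg
      simpa [f, MonoidHom.mk', F, dif_pos hgN] using this
    have key : Abelianization.of (u * g * u⁻¹) = Abelianization.of g := by
      rw [map_mul, map_mul, map_inv, mul_comm (Abelianization.of u), mul_assoc,
        mul_inv_cancel, mul_one]
    have h2 : x ^ 2 = Abelianization.of g * Abelianization.of (u * g * u⁻¹) := by
      rw [← hg, sq, key]
    rw [h2, ← map_mul, h1, map_one]
  · have h1 : g * g = 1 := by
      have := congrArg Subtype.val hfg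
      simpa [f, MonoidHom.mk', F, dif_neg hgN] using this
    rw [← hg, sq, ← map_mul, h1, map_one]


set_option maxHeartbeats 1000000 in
private theorem aux_struct (G : Type*) [Group G] (N : Subgroup G) (n : ℕ)
    (hidx : N.index = 2) (e : ↥N ≃* Multiplicative (Fin n → ℤ))
    (htor : ∀ x : Abelianization G, IsOfFinOrder x → x ^ 2 = 1) :
    ∃ k l : ℕ, k + l ≤ n + 1 ∧
      Nonempty (Abelianization G ≃*
        Multiplicative ((Fin l → ℤ) × (Fin k → ZMod 2))) := by
  classical
  have hmm : ∀ a b : G, a * b ∈ N ↔ (a ∈ N ↔ b ∈ N) := fun a b =>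
    Subgroup.mul_mem_iff_of_index_two hidx
  obtain ⟨u, hu⟩ : ∃ u : G, u ∉ N := by
    by_contra h
    push_neg at h
    have : N = ⊤ := by ext g; simpa using h g
    rw [this, Subgroup.index_top] at hidx
    omega
  letI : CommGroup ↥N :=
    { (inferInstance : Group ↥N) with
      mul_comm := fun x y => e.injective (by rw [map_mul, map_mul, mul_comm]) }
  -- generators of N
  set gN : Fin n → ↥N := fun i => e.symm (Multiplicative.ofAdd (Pi.single i 1)) with hgNdef
  set gens : Fin n → G := fun i => (gN i : G) with hgensdef
  have hNgen : ∀ x : ↥N, x ∈ Subgroup.closure (Set.range gN) := by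
    intro x
    have hx : x = ∏ i : Fin n, (gN i) ^ ((e x).toAdd i) := by
      apply e.injective
      rw [map_prod]
      have h1 : ∀ i : Fin n, e ((gN i) ^ ((e x).toAdd i)) =
          Multiplicative.ofAdd (((e x).toAdd i) • (Pi.single i 1 : Fin n → ℤ)) := by
        intro i
        rw [map_zpow, hgNdef]
        simp only [MulEquiv.apply_symm_apply]
        rw [ofAdd_zsmul]
      simp_rw [h1]
      rw [← ofAdd_sum]
      have h2 : (∑ i : Fin n, ((e x).toAdd i) • (Pi.single i 1 : Fin n → ℤ)) = (e x).toAdd := by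
        have : ∀ i : Fin n, ((e x).toAdd i) • (Pi.single i 1 : Fin n → ℤ)
            = (Pi.single i ((e x).toAdd i) : Fin n → ℤ) := by
          intro i
          funext j
          by_cases hji : j = i
          · subst hji; simp
          · simp [Pi.single_eq_of_ne hji]
        simp_rw [this]
        exact Finset.univ_sum_single _
      rw [h2]
      simp
    rw [hx]
    exact Subgroup.prod_mem _ fun i _ =>
      Subgroup.zpow_mem _ (Subgroup.subset_closure (Set.mem_range_self i)) _
  have hsub : ∀ g ∈ N, g ∈ Subgroup.closure (insert u (Set.range gens)) := by
    intro g hg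
    have h1 : Subgroup.closure (Set.range gN) ≤
        (Subgroup.closure (insert u (Set.range gens))).comap N.subtype := by
      rw [Subgroup.closure_le]
      rintro _ ⟨i, rfl⟩
      exact Subgroup.subset_closure (Set.mem_insert_of_mem _ ⟨i, rfl⟩)
    exact Subgroup.mem_comap.mp (h1 (hNgen ⟨g, hg⟩))
  have hGtop : Subgroup.closure (insert u (Set.range gens)) = ⊤ := by
    rw [Subgroup.eq_top_iff']
    intro g
    by_cases hg : g ∈ N
    · exact hsub g hg
    · have hui : u⁻¹ ∉ N := by simpa using hu
      have h2 : u⁻¹ * g ∈ N := (hmm _ _).2 (by simp [hui, hg])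
      have h3 : g = u * (u⁻¹ * g) := by group
      rw [h3]
      exact mul_mem (Subgroup.subset_closure (Set.mem_insert _ _)) (hsub _ h2)
  -- push to abelianization
  set c : Fin (n + 1) → G := Fin.cons u gens with hcdef
  have hc : insert u (Set.range gens) = Set.range c := (Fin.range_cons u gens).symm
  have hsurj : Function.Surjective (Abelianization.of (G := G)) :=
    QuotientGroup.mk'_surjective _
  have hAb : Subgroup.closure (Set.range fun i => Abelianization.of (c i)) = ⊤ := by
    have : (Set.range fun i => Abelianization.of (c i)) = Abelianization.of '' Set.range c := by
      rw [← Set.range_comp]; rfl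
    rw [this, ← MonoidHom.map_closure, ← hc, hGtop]
    exact Subgroup.map_top_of_surjective _ hsurj
  -- to additive
  set A := Additive (Abelianization G) with hAdef
  set w : Fin (n + 1) → A := fun i => Additive.ofMul (Abelianization.of (c i)) with hwdef
  have hW : AddSubgroup.closure (Set.range w) = ⊤ := by
    rw [AddSubgroup.eq_top_iff']
    intro a
    have key : ∀ y : Abelianization G,
        y ∈ Subgroup.closure (Set.range fun i => Abelianization.of (c i)) →
        Additive.ofMul y ∈ AddSubgroup.closure (Set.range w) := by
      intro y hy
      refine Subgroup.closure_induction ?_ ?_ ?_ ?_ hy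
      · rintro _ ⟨i, rfl⟩
        exact AddSubgroup.subset_closure ⟨i, rfl⟩
      · exact AddSubgroup.zero_mem _
      · intro y z _ _ hy hz
        exact AddSubgroup.add_mem _ hy hz
      · intro y _ hy
        exact AddSubgroup.neg_mem _ hy
    have := key (Additive.toMul a) (by rw [hAb]; trivial)
    simpa using this
  have hspanA : Submodule.span ℤ (Set.range w) = ⊤ := by
    have h1 := Submodule.span_int_eq_addSubgroupClosure (M := A) (Set.range w)
    rw [hW] at h1
    rw [Submodule.eq_top_iff']
    intro x
    have : x ∈ (Submodule.span ℤ (Set.range w)).toAddSubgroup := by rw [h1]; trivial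
    exact this
  haveI hfinA : Module.Finite ℤ A :=
    ⟨⟨(Set.finite_range w).toFinset, by rw [Set.Finite.coe_toFinset]; exact hspanA⟩⟩
  -- torsion submodule
  set T : Submodule ℤ A := Submodule.torsion ℤ A with hTdef
  have h2T : ∀ x : ↥T, (2 : ℕ) • x = 0 := by
    intro x
    obtain ⟨⟨cc, hcc⟩, hcx⟩ := x.2
    have hc0 : (cc : ℤ) ≠ 0 := nonZeroDivisors.ne_zero hcc
    have hcx' : cc • (x : A) = 0 := hcx
    have hm : cc.natAbs • (x : A) = 0 := by
      have : ((cc.natAbs : ℤ)) • (x : A) = 0 := by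
        rcases Int.natAbs_eq cc with h | h
        · rw [← h]; exact hcx'
        · rw [← neg_neg ((cc.natAbs : ℤ)), ← h, neg_smul, hcx', neg_zero]
      rwa [natCast_zsmul] at this
    have hfin : IsOfFinOrder (Additive.toMul (x : A)) := by
      refine isOfFinOrder_iff_pow_eq_one.mpr ⟨cc.natAbs, Int.natAbs_pos.mpr hc0, ?_⟩
      rw [← toMul_nsmul, hm]
      rfl
    have h2 := htor _ hfin
    have h3 : (2 : ℕ) • (x : A) = 0 := by
      apply Additive.toMul.injective
      rw [toMul_nsmul]
      exact h2
    refine Subtype.ext ?_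
    rw [show ((2 : ℕ) • x : ↥T) = x + x from two_nsmul x]
    push_cast
    rw [← two_nsmul]
    exact h3
  letI : Module (ZMod 2) ↥T := AddCommGroup.zmodModule (n := 2) h2T
  haveI : IsNoetherian ℤ A := isNoetherian_of_isNoetherianRing_of_finite ℤ A
  haveI hTfin : Module.Finite ℤ ↥T := Module.Finite.iff_fg.mpr (IsNoetherian.noetherian T)
  haveI hTfin2 : Module.Finite (ZMod 2) ↥T := by
    obtain ⟨S, hS⟩ := hTfin.fg_top
    refine ⟨⟨S, ?_⟩⟩
    have h1 := Submodule.span_int_eq_addSubgroupClosure (M := ↥T) (S : Set ↥T)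
    rw [hS] at h1
    rw [Submodule.eq_top_iff']
    intro x
    have hx : x ∈ AddSubgroup.closure (S : Set ↥T) := by
      rw [← h1]; trivial
    have hle : AddSubgroup.closure (S : Set ↥T) ≤
        (Submodule.span (ZMod 2) (S : Set ↥T)).toAddSubgroup :=
      (AddSubgroup.closure_le _).mpr Submodule.subset_span
    exact hle hx
  -- quotient
  set Q := A ⧸ T with hQdef
  haveI : Module.Free ℤ Q := Module.free_of_finite_type_torsion_free'
  set l := Module.finrank ℤ Q with hldef
  set k := Module.finrank (ZMod 2) ↥T with hkdef
  -- splitting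
  set π := T.mkQ with hπdef
  obtain ⟨s, hs⟩ := Module.projective_lifting_property π LinearMap.id (Submodule.mkQ_surjective T)
  have hπs : ∀ q : Q, π (s q) = q := by
    intro q
    have := LinearMap.congr_fun hs q
    simpa using this
  have hd : ∀ x : A, x - s (π x) ∈ T := by
    intro x
    have h0 : π (x - s (π x)) = 0 := by
      rw [map_sub, hπs, sub_self]
    rwa [hπdef, Submodule.mkQ_apply, Submodule.Quotient.mk_eq_zero] at h0
  set φ : A →ₗ[ℤ] ↥T × Q :=
    LinearMap.prod
      (LinearMap.codRestrict T (LinearMap.id - s ∘ₗ π) (fun x => by simpa using hd x)) π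
    with hφdef
  set ψ : ↥T × Q →ₗ[ℤ] A :=
    T.subtype ∘ₗ LinearMap.fst ℤ ↥T Q + s ∘ₗ LinearMap.snd ℤ ↥T Q with hψdef
  have hψφ : ψ ∘ₗ φ = LinearMap.id := by
    apply LinearMap.ext
    intro x
    simp [hψdef, hφdef, sub_add_cancel]
  have hφψ : φ ∘ₗ ψ = LinearMap.id := by
    apply LinearMap.ext
    rintro ⟨t, q⟩
    have hπt : π (t : A) = 0 := by
      rw [hπdef, Submodule.mkQ_apply, Submodule.Quotient.mk_eq_zero]
      exact t.2
    apply Prod.ext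
    · apply Subtype.ext
      simp [hψdef, hφdef, hπt, hπs]
    · simp [hψdef, hφdef, hπt, hπs]
  set eqv : A ≃ₗ[ℤ] ↥T × Q := LinearEquiv.ofLinear φ ψ hφψ hψφ with heqvdef
  -- bases
  set eQ : Q ≃ₗ[ℤ] (Fin l → ℤ) := (Module.finBasis ℤ Q).equivFun with heQ
  set eT : ↥T ≃ₗ[ZMod 2] (Fin k → ZMod 2) := (Module.finBasis (ZMod 2) ↥T).equivFun with heT
  set E : A ≃+ ((Fin l → ℤ) × (Fin k → ZMod 2)) :=
    eqv.toAddEquiv.trans ((AddEquiv.prodCongr eT.toAddEquiv eQ.toAddEquiv).trans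
      AddEquiv.prodComm) with hE
  -- counting
  set V := ((Fin l → ZMod 2) × (Fin k → ZMod 2)) with hV
  set ρ1 : (Fin l → ℤ) →+ (Fin l → ZMod 2) :=
    { toFun := fun f i => ((f i : ℤ) : ZMod 2)
      map_zero' := by funext i; simp
      map_add' := by intro f g; funext i; simp } with hρ1
  set ρ : ((Fin l → ℤ) × (Fin k → ZMod 2)) →+ V :=
    AddMonoidHom.prodMap ρ1 (AddMonoidHom.id _) with hρdef
  have hρsurj : Function.Surjective ρ := by
    rintro ⟨v1, v2⟩
    refine ⟨(fun i => Classical.choose (ZMod.intCast_surjective (v1 i)), v2), ?_⟩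
    refine Prod.ext ?_ rfl
    funext i
    exact Classical.choose_spec (ZMod.intCast_surjective (v1 i))
  set σ : A →+ V := ρ.comp E.toAddMonoidHom with hσdef
  have hσsurj : Function.Surjective σ := hρsurj.comp E.surjective
  have hVtop : AddSubgroup.closure (Set.range fun i => σ (w i)) = ⊤ := by
    have h1 : (Set.range fun i => σ (w i)) = σ '' Set.range w := by
      rw [← Set.range_comp]; rfl
    rw [h1, ← AddMonoidHom.map_closure, hW]
    exact AddSubgroup.map_top_of_surjective _ hσsurj
  have hspanV : Submodule.span (ZMod 2) (Set.range fun i => σ (w i)) = ⊤ := by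
    rw [Submodule.eq_top_iff']
    intro x
    have hx : x ∈ AddSubgroup.closure (Set.range fun i => σ (w i)) := by
      rw [hVtop]; trivial
    exact (AddSubgroup.closure_le
      ((Submodule.span (ZMod 2) (Set.range fun i => σ (w i))).toAddSubgroup)).mpr
      Submodule.subset_span hx
  have hfr : Module.finrank (ZMod 2) V ≤ n + 1 := by
    have := finrank_le_of_span_eq_top hspanV
    simpa using this
  have hfrV : Module.finrank (ZMod 2) V = l + k := by
    show Module.finrank (ZMod 2) ((Fin l → ZMod 2) × (Fin k → ZMod 2)) = l + k
    rw [Module.finrank_prod, Module.finrank_fin_fun, Module.finrank_fin_fun]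
  exact ⟨k, l, by omega, ⟨AddEquiv.toMultiplicativeRight E⟩⟩


/-- Let `G` be a group containing a subgroup `N` of index `2` such that `N`
is free abelian of finite rank `n`.  Then every torsion element of the abelianization
`Gᵃᵇ = G/[G,G]` has order dividing `2`; consequently `Gᵃᵇ ≅ ℤˡ × (ℤ/2ℤ)ᵏ` for some
`k, l ≥ 0`, and moreover `k + l ≤ n + 1`. -/
theorem abelianization_of_index_two_free_abelian
    (G : Type*) [Group G] (N : Subgroup G) (n : ℕ)
    (hidx : N.index = 2)
    (hfree : Nonempty (N ≃* Multiplicative (Fin n → ℤ))) :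
    (∀ x : Abelianization G, IsOfFinOrder x → x ^ 2 = 1) ∧
    ∃ k l : ℕ, k + l ≤ n + 1 ∧
      Nonempty (Abelianization G ≃*
        Multiplicative ((Fin l → ℤ) × (Fin k → ZMod 2))) := by
  obtain ⟨e⟩ := hfree
  have htor := aux_torsion G N n hidx e
  exact ⟨htor, aux_struct G N n hidx e htor⟩
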